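/- With $E$ as above, suppose $a^1,\ldots,a^N \in E$ are skipped blocks, i.e., there exist $0 = r_0 < r_1 < \cdots < r_N$ with $\mathrm{supp}(a^k) \subset (r_{k-1}, r_k)$ (strictly inside, leaving gaps at the endpoints) for each $k$. Let $\varepsilon_k = \|\sum_{i=1}^\infty a^k_i x_i\|_X$. Then $\|\sum_{k=1}^N a^k\|_E \leq \sum_{k=1}^N \varepsilon_k + 2\big(\sum_{k=1}^N \|a^k\|_E^2\big)^{1/2}$. -/

import Mathlib

/-- The set of values whose supremum defines the norm of the Lindenstrauss space `E`. -/
noncomputable def ENormSet {X : Type*} [NormedAddCommGroup X] [NormedSpace ℝ X]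
    (x : ℕ → X) (a : ℕ → ℝ) : Set ℝ :=
  { r | ∃ (k : ℕ) (p : ℕ → ℕ), p 0 = 0 ∧ StrictMono p ∧
      r = Real.sqrt (∑ j ∈ Finset.range k,
        ‖∑ i ∈ Finset.Ioc (p j) (p (j + 1)), a i • x i‖ ^ 2) }

/-- The norm `‖a‖_E`. -/
noncomputable def LindENorm {X : Type*} [NormedAddCommGroup X] [NormedSpace ℝ X]
    (x : ℕ → X) (a : ℕ → ℝ) : ℝ :=
  sSup (ENormSet x a)

open Finset

namespace EnormSkippedAux

/-- Minkowski inequality in ℓ² for finite sums. -/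
lemma sqrt_sum_sq_add_le (m : ℕ) (f g : ℕ → ℝ) :
    Real.sqrt (∑ j ∈ range m, (f j + g j) ^ 2) ≤
      Real.sqrt (∑ j ∈ range m, f j ^ 2) + Real.sqrt (∑ j ∈ range m, g j ^ 2) := by
  have hA : (0:ℝ) ≤ ∑ j ∈ range m, f j ^ 2 := sum_nonneg fun _ _ => sq_nonneg _
  have hB : (0:ℝ) ≤ ∑ j ∈ range m, g j ^ 2 := sum_nonneg fun _ _ => sq_nonneg _
  have h := Real.sum_mul_le_sqrt_mul_sqrt (range m) f g
  have e1 := Real.sq_sqrt hA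
  have e2 := Real.sq_sqrt hB
  have expand : ∑ j ∈ range m, (f j + g j) ^ 2
      = ∑ j ∈ range m, f j ^ 2 + 2 * ∑ j ∈ range m, f j * g j + ∑ j ∈ range m, g j ^ 2 := by
    rw [mul_sum, ← sum_add_distrib, ← sum_add_distrib]
    exact Finset.sum_congr rfl fun j _ => by ring
  rw [show Real.sqrt (∑ j ∈ range m, f j ^ 2) + Real.sqrt (∑ j ∈ range m, g j ^ 2)
      = Real.sqrt ((Real.sqrt (∑ j ∈ range m, f j ^ 2)
          + Real.sqrt (∑ j ∈ range m, g j ^ 2)) ^ 2) from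
    (Real.sqrt_sq (by positivity)).symm]
  apply Real.sqrt_le_sqrt
  nlinarith [Real.sqrt_nonneg (∑ j ∈ range m, f j ^ 2),
    Real.sqrt_nonneg (∑ j ∈ range m, g j ^ 2)]

lemma sqrt_sum_sq_le_sum {ι : Type*} (s : Finset ι) (f : ι → ℝ) (hf : ∀ j ∈ s, 0 ≤ f j) :
    Real.sqrt (∑ j ∈ s, f j ^ 2) ≤ ∑ j ∈ s, f j := by
  rw [show ∑ j ∈ s, f j = Real.sqrt ((∑ j ∈ s, f j) ^ 2) from
    (Real.sqrt_sq (sum_nonneg hf)).symm]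
  apply Real.sqrt_le_sqrt
  rw [sq, Finset.sum_mul]
  apply Finset.sum_le_sum
  intro j hj
  rw [sq]
  exact mul_le_mul_of_nonneg_left (Finset.single_le_sum hf hj) (hf j hj)

lemma sum_smul_congr {X : Type*} [NormedAddCommGroup X] [NormedSpace ℝ X]
    (x : ℕ → X) (a : ℕ → ℝ) {s t : Finset ℕ}
    (h : ∀ i, a i ≠ 0 → (i ∈ s ↔ i ∈ t)) :
    ∑ i ∈ s, a i • x i = ∑ i ∈ t, a i • x i := by
  classical
  have hs : ∑ i ∈ s.filter (fun i => a i ≠ 0), a i • x i = ∑ i ∈ s, a i • x i :=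
    Finset.sum_filter_of_ne fun i _ hi h0 => hi (by rw [h0, zero_smul])
  have ht : ∑ i ∈ t.filter (fun i => a i ≠ 0), a i • x i = ∑ i ∈ t, a i • x i :=
    Finset.sum_filter_of_ne fun i _ hi h0 => hi (by rw [h0, zero_smul])
  rw [← hs, ← ht]
  congr 1
  ext i
  simp only [Finset.mem_filter]
  constructor
  · rintro ⟨h1, h2⟩; exact ⟨(h i h2).1 h1, h2⟩
  · rintro ⟨h1, h2⟩; exact ⟨(h i h2).2 h1, h2⟩

/-- sum over a set of at most one element is bounded by the ℓ² norm -/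
lemma norm_sum_le_sqrt_of_subsingleton {X : Type*} [NormedAddCommGroup X] {ι : Type*}
    (S : Finset ι) (hS : S.card ≤ 1) (v : ι → X) :
    ‖∑ k ∈ S, v k‖ ≤ Real.sqrt (∑ k ∈ S, ‖v k‖ ^ 2) := by
  rcases S.eq_empty_or_nonempty with rfl | ⟨k, hk⟩
  · simp
  · have hsing : S = {k} := by
      apply Finset.eq_singleton_iff_unique_mem.2
      exact ⟨hk, fun b hb => Finset.card_le_one.1 hS b hb k hk⟩
    subst hsing
    simp [Real.sqrt_sq (norm_nonneg _)]

end EnormSkippedAux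

open EnormSkippedAux

/-- If `a¹, …, aᴺ` are skipped blocks, i.e. `supp aᵏ ⊆ (r_{k-1}, r_k)` for some
`0 = r₀ < r₁ < ⋯ < r_N`, and `ε_k = ‖∑ᵢ aᵏᵢ xᵢ‖`, then
`‖∑ₖ aᵏ‖_E ≤ ∑ₖ ε_k + 2 (∑ₖ ‖aᵏ‖_E²)^{1/2}`. -/
theorem enorm_skipped_blocks {X : Type*} [NormedAddCommGroup X] [NormedSpace ℝ X]
    [CompleteSpace X]
    (x : ℕ → X) (hx : ∀ i, ‖x i‖ = 1)
    (N : ℕ) (a : Fin N → ℕ → ℝ) (r : Fin (N + 1) → ℕ)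
    (hr0 : r 0 = 0) (hrmono : StrictMono r)
    (hsupp : ∀ (k : Fin N) (i : ℕ), a k i ≠ 0 → r k.castSucc < i ∧ i < r k.succ)
    (haE : ∀ k, BddAbove (ENormSet x (a k)))
    (ε : Fin N → ℝ)
    (hε : ∀ k : Fin N, ε k = ‖∑ i ∈ Finset.Ioo (r k.castSucc) (r k.succ), a k i • x i‖) :
    LindENorm x (∑ k, a k) ≤
      ∑ k, ε k + 2 * Real.sqrt (∑ k, LindENorm x (a k) ^ 2) := by
  classical
  have hε0 : ∀ k, 0 ≤ ε k := fun k => (hε k) ▸ norm_nonneg _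
  have hRHS : 0 ≤ ∑ k, ε k + 2 * Real.sqrt (∑ k, LindENorm x (a k) ^ 2) :=
    add_nonneg (Finset.sum_nonneg fun k _ => hε0 k) (by positivity)
  apply Real.sSup_le _ hRHS
  rintro v ⟨m, p, hp0, hpm, rfl⟩
  -- the blocks ordering: support of `a k` is below support of `a k'` when `k < k'`
  have hord : ∀ (k k' : Fin N) (i i' : ℕ), k < k' → a k i ≠ 0 → a k' i' ≠ 0 → i < i' := by
    intro k k' i i' hlt hai hai'
    have h1 := (hsupp k i hai).2
    have h2 := (hsupp k' i' hai').1
    have hle : r k.succ ≤ r k'.castSucc := by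
      apply hrmono.monotone
      simp only [Fin.le_def, Fin.val_succ, Fin.coe_castSucc]
      exact hlt
    omega
  -- the pieces
  set piece : Fin N → ℕ → X := fun k j => ∑ i ∈ Finset.Ioc (p j) (p (j + 1)), a k i • x i
    with hpiece
  -- the three classes of blocks relative to interval j
  set Fs : ℕ → Finset (Fin N) := fun j => Finset.univ.filter fun k =>
      (∃ i, a k i ≠ 0 ∧ p j < i ∧ i ≤ p (j + 1)) ∧ ¬ (∃ i, a k i ≠ 0 ∧ i ≤ p j)
        ∧ ¬ (∃ i, a k i ≠ 0 ∧ p (j + 1) < i) with hFs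
  set Ls : ℕ → Finset (Fin N) := fun j => Finset.univ.filter fun k =>
      (∃ i, a k i ≠ 0 ∧ p j < i ∧ i ≤ p (j + 1)) ∧ (∃ i, a k i ≠ 0 ∧ i ≤ p j) with hLs
  set Rs : ℕ → Finset (Fin N) := fun j => Finset.univ.filter fun k =>
      (∃ i, a k i ≠ 0 ∧ p j < i ∧ i ≤ p (j + 1)) ∧ ¬ (∃ i, a k i ≠ 0 ∧ i ≤ p j)
        ∧ (∃ i, a k i ≠ 0 ∧ p (j + 1) < i) with hRs
  -- splitting of each interval sum
  have hsplit : ∀ j, (∑ i ∈ Finset.Ioc (p j) (p (j + 1)), (∑ k, a k) i • x i)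
      = (∑ k ∈ Fs j, piece k j) + ((∑ k ∈ Ls j, piece k j) + (∑ k ∈ Rs j, piece k j)) := by
    intro j
    have h1 : (∑ i ∈ Finset.Ioc (p j) (p (j + 1)), (∑ k, a k) i • x i)
        = ∑ k : Fin N, piece k j := by
      simp only [hpiece, Finset.sum_apply, Finset.sum_smul]
      exact Finset.sum_comm
    rw [h1]
    have hdisj1 : Disjoint (Ls j) (Rs j) := by
      rw [Finset.disjoint_left]
      intro k hk hk'
      simp only [hLs, hRs, Finset.mem_filter, Finset.mem_univ, true_and] at hk hk'
      exact hk'.2.1 hk.2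
    have hdisj2 : Disjoint (Fs j) (Ls j ∪ Rs j) := by
      rw [Finset.disjoint_left]
      intro k hk hk'
      simp only [hFs, hLs, hRs, Finset.mem_filter, Finset.mem_union, Finset.mem_univ,
        true_and] at hk hk'
      rcases hk' with h | h
      · exact hk.2.1 h.2
      · exact hk.2.2 h.2.2
    rw [← Finset.sum_union hdisj1, ← Finset.sum_union hdisj2]
    symm
    apply Finset.sum_subset (Finset.subset_univ _)
    intro k _ hk
    simp only [hFs, hLs, hRs, Finset.mem_union, Finset.mem_filter, Finset.mem_univ,
      true_and] at hk
    apply Finset.sum_eq_zero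
    intro i hi
    by_contra hne
    have hai : a k i ≠ 0 := fun h0 => hne (by rw [h0, zero_smul])
    simp only [Finset.mem_Ioc] at hi
    have hIn : ∃ i, a k i ≠ 0 ∧ p j < i ∧ i ≤ p (j + 1) := ⟨i, hai, hi.1, hi.2⟩
    apply hk
    by_cases hL : ∃ i, a k i ≠ 0 ∧ i ≤ p j
    · exact Or.inr (Or.inl ⟨hIn, hL⟩)
    · by_cases hR : ∃ i, a k i ≠ 0 ∧ p (j + 1) < i
      · exact Or.inr (Or.inr ⟨hIn, hL, hR⟩)
      · exact Or.inl ⟨hIn, hL, hR⟩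
  -- blocks fully inside an interval: the piece is the full block sum
  have hFfull : ∀ j, ∀ k ∈ Fs j, ‖piece k j‖ = ε k := by
    intro j k hk
    simp only [hFs, Finset.mem_filter, Finset.mem_univ, true_and] at hk
    obtain ⟨-, hnL, hnR⟩ := hk
    push_neg at hnL hnR
    rw [hpiece, hε]
    congr 1
    apply sum_smul_congr
    intro i hai
    simp only [Finset.mem_Ioc, Finset.mem_Ioo]
    constructor
    · intro _; exact hsupp k i hai
    · intro _
      exact ⟨hnL i hai, hnR i hai⟩
  -- the F-classes are pairwise disjoint over intervals
  have hFdisj : ∀ j j', j ≠ j' → Disjoint (Fs j) (Fs j') := by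
    intro j j' hne
    rw [Finset.disjoint_left]
    intro k hk hk'
    simp only [hFs, Finset.mem_filter, Finset.mem_univ, true_and] at hk hk'
    obtain ⟨⟨i, hai, hpi, hpi2⟩, hnL, hnR⟩ := hk
    obtain ⟨⟨i', hai', hpi', hpi2'⟩, hnL', hnR'⟩ := hk'
    rcases lt_or_gt_of_ne hne with h | h
    · have : p (j + 1) ≤ p j' := hpm.monotone h
      exact hnL' ⟨i, hai, by omega⟩
    · have : p (j' + 1) ≤ p j := hpm.monotone h
      exact hnR' ⟨i, hai, by omega⟩
  -- uniqueness in the L and R classes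
  have hLcard : ∀ j, (Ls j).card ≤ 1 := by
    intro j
    rw [Finset.card_le_one]
    intro k hk k' hk'
    by_contra hne
    have key : ∀ b b' : Fin N, b < b' → b ∈ Ls j → b' ∈ Ls j → False := by
      intro b b' hlt hb hb'
      simp only [hLs, Finset.mem_filter, Finset.mem_univ, true_and] at hb hb'
      obtain ⟨⟨i, hai, hpi, -⟩, -⟩ := hb
      obtain ⟨-, ⟨i', hai', hpi'⟩⟩ := hb'
      have := hord b b' i i' hlt hai hai'
      omega
    rcases lt_trichotomy k k' with h | h | h
    · exact key k k' h hk hk'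
    · exact hne h
    · exact key k' k h hk' hk
  have hRcard : ∀ j, (Rs j).card ≤ 1 := by
    intro j
    rw [Finset.card_le_one]
    intro k hk k' hk'
    by_contra hne
    have key : ∀ b b' : Fin N, b < b' → b ∈ Rs j → b' ∈ Rs j → False := by
      intro b b' hlt hb hb'
      simp only [hRs, Finset.mem_filter, Finset.mem_univ, true_and] at hb hb'
      obtain ⟨-, -, ⟨i, hai, hpi⟩⟩ := hb
      obtain ⟨⟨i', hai', hpi', hpi2'⟩, -⟩ := hb'
      have := hord b b' i i' hlt hai hai'
      omega
    rcases lt_trichotomy k k' with h | h | h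
    · exact key k k' h hk hk'
    · exact hne h
    · exact key k' k h hk' hk
  -- the per-interval norm bound
  have hnormj : ∀ j, ‖∑ i ∈ Finset.Ioc (p j) (p (j + 1)), (∑ k, a k) i • x i‖ ≤
      (∑ k ∈ Fs j, ε k) + (Real.sqrt (∑ k ∈ Ls j, ‖piece k j‖ ^ 2)
        + Real.sqrt (∑ k ∈ Rs j, ‖piece k j‖ ^ 2)) := by
    intro j
    rw [hsplit j]
    refine (norm_add_le _ _).trans (add_le_add ?_ ((norm_add_le _ _).trans
      (add_le_add ?_ ?_)))
    · refine (norm_sum_le _ _).trans ?_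
      apply le_of_eq
      exact Finset.sum_congr rfl fun k hk => hFfull j k hk
    · exact norm_sum_le_sqrt_of_subsingleton _ (hLcard j) _
    · exact norm_sum_le_sqrt_of_subsingleton _ (hRcard j) _
  -- ℓ² bound for the pieces of a single block
  have hblock : ∀ k, ∑ j ∈ range m, ‖piece k j‖ ^ 2 ≤ LindENorm x (a k) ^ 2 := by
    intro k
    have hmem : Real.sqrt (∑ j ∈ range m, ‖piece k j‖ ^ 2) ∈ ENormSet x (a k) :=
      ⟨m, p, hp0, hpm, rfl⟩
    have hle : Real.sqrt (∑ j ∈ range m, ‖piece k j‖ ^ 2) ≤ LindENorm x (a k) :=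
      le_csSup (haE k) hmem
    have h0 : (0:ℝ) ≤ ∑ j ∈ range m, ‖piece k j‖ ^ 2 := sum_nonneg fun _ _ => sq_nonneg _
    calc ∑ j ∈ range m, ‖piece k j‖ ^ 2
        = Real.sqrt (∑ j ∈ range m, ‖piece k j‖ ^ 2) ^ 2 := (Real.sq_sqrt h0).symm
      _ ≤ LindENorm x (a k) ^ 2 := pow_le_pow_left₀ (Real.sqrt_nonneg _) hle 2
  -- bound on the L-part and R-part
  have hLpart : ∀ S : ℕ → Finset (Fin N),
      Real.sqrt (∑ j ∈ range m, Real.sqrt (∑ k ∈ S j, ‖piece k j‖ ^ 2) ^ 2)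
        ≤ Real.sqrt (∑ k, LindENorm x (a k) ^ 2) := by
    intro S
    apply Real.sqrt_le_sqrt
    calc ∑ j ∈ range m, Real.sqrt (∑ k ∈ S j, ‖piece k j‖ ^ 2) ^ 2
        = ∑ j ∈ range m, ∑ k ∈ S j, ‖piece k j‖ ^ 2 :=
          Finset.sum_congr rfl fun j _ =>
            Real.sq_sqrt (sum_nonneg fun _ _ => sq_nonneg _)
      _ ≤ ∑ j ∈ range m, ∑ k : Fin N, ‖piece k j‖ ^ 2 :=
          Finset.sum_le_sum fun j _ =>
            Finset.sum_le_sum_of_subset_of_nonneg (Finset.subset_univ _)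
              fun _ _ _ => sq_nonneg _
      _ = ∑ k : Fin N, ∑ j ∈ range m, ‖piece k j‖ ^ 2 := Finset.sum_comm
      _ ≤ ∑ k, LindENorm x (a k) ^ 2 := Finset.sum_le_sum fun k _ => hblock k
  -- bound on the F-part
  have hFpart : Real.sqrt (∑ j ∈ range m, (∑ k ∈ Fs j, ε k) ^ 2) ≤ ∑ k, ε k := by
    refine (sqrt_sum_sq_le_sum _ _ fun j _ => Finset.sum_nonneg fun k _ => hε0 k).trans ?_
    rw [← Finset.sum_biUnion]
    · exact Finset.sum_le_sum_of_subset_of_nonneg (Finset.subset_univ _)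
        fun k _ _ => hε0 k
    · intro j _ j' _ hne
      exact hFdisj j j' hne
  -- put everything together
  calc Real.sqrt (∑ j ∈ range m,
        ‖∑ i ∈ Finset.Ioc (p j) (p (j + 1)), (∑ k, a k) i • x i‖ ^ 2)
      ≤ Real.sqrt (∑ j ∈ range m, ((∑ k ∈ Fs j, ε k)
          + (Real.sqrt (∑ k ∈ Ls j, ‖piece k j‖ ^ 2)
            + Real.sqrt (∑ k ∈ Rs j, ‖piece k j‖ ^ 2))) ^ 2) := by
        apply Real.sqrt_le_sqrt
        exact Finset.sum_le_sum fun j _ =>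
          pow_le_pow_left₀ (norm_nonneg _) (hnormj j) 2
    _ ≤ Real.sqrt (∑ j ∈ range m, (∑ k ∈ Fs j, ε k) ^ 2)
          + Real.sqrt (∑ j ∈ range m, (Real.sqrt (∑ k ∈ Ls j, ‖piece k j‖ ^ 2)
            + Real.sqrt (∑ k ∈ Rs j, ‖piece k j‖ ^ 2)) ^ 2) :=
        sqrt_sum_sq_add_le m _ _
    _ ≤ Real.sqrt (∑ j ∈ range m, (∑ k ∈ Fs j, ε k) ^ 2)
          + (Real.sqrt (∑ j ∈ range m, Real.sqrt (∑ k ∈ Ls j, ‖piece k j‖ ^ 2) ^ 2)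
            + Real.sqrt (∑ j ∈ range m, Real.sqrt (∑ k ∈ Rs j, ‖piece k j‖ ^ 2) ^ 2)) :=
        add_le_add_right (sqrt_sum_sq_add_le m (fun j => Real.sqrt (∑ k ∈ Ls j, ‖piece k j‖ ^ 2))
          (fun j => Real.sqrt (∑ k ∈ Rs j, ‖piece k j‖ ^ 2))) _
    _ ≤ ∑ k, ε k + (Real.sqrt (∑ k, LindENorm x (a k) ^ 2)
          + Real.sqrt (∑ k, LindENorm x (a k) ^ 2)) :=
        add_le_add hFpart (add_le_add (hLpart Ls) (hLpart Rs))
    _ = ∑ k, ε k + 2 * Real.sqrt (∑ k, LindENorm x (a k) ^ 2) := by ring
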